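/- There exists a constant C>0 (one may take C = e^{|α|T}(1+μ_M T) with μ_M := max_{s∈[0,T]} μ(s)) such that for every t∈[0,T] and every z1, z2∈(0,∞), |w(t,z2)−w(t,z1)| ≤ C·|z2−z1|. That is, z ↦ w(t,z) is Lipschitz continuous uniformly in t. -/

import Mathlib

open MeasureTheory ProbabilityTheory Filter Set
open scoped ENNReal

noncomputable section

/-- The setting of De Angelis–Milazzo–Stabile: a probability space carrying a
Brownian motion `W` with filtration `F`, market/contract parameters, a penalty
function `k` and a mortality force `mu` satisfying Assumption 1 of the paper. -/
structure VASetting (Ω : Type*) [mΩ : MeasurableSpace Ω] where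
  /-- the underlying probability measure `ℙ` -/
  P : Measure Ω
  probP : IsProbabilityMeasure P
  /-- the filtration generated by the Brownian motion -/
  F : Filtration ℝ mΩ
  /-- the driving Brownian motion -/
  W : ℝ → Ω → ℝ
  T : ℝ
  sigma : ℝ
  r : ℝ
  c : ℝ
  g : ℝ
  lam : ℝ
  /-- the penalty (surrender charge) function -/
  k : ℝ → ℝ
  /-- the mortality force -/
  mu : ℝ → ℝ
  hT : 0 < T
  hsigma : 0 < sigma
  hr : 0 ≤ r
  hc : 0 ≤ c
  hg : 0 ≤ g
  hlam : 0 ≤ lam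
  -- `W` is a standard Brownian motion for the filtration `F`
  hW0 : ∀ ω, W 0 ω = 0
  hWcont : ∀ ω, Continuous fun s => W s ω
  hWmeas : ∀ s, Measurable (W s)
  hWadapted : Adapted F W
  hWgauss : ∀ s t : ℝ, 0 ≤ s → s ≤ t →
    Measure.map (fun ω => W t ω - W s ω) P = gaussianReal 0 (Real.toNNReal (t - s))
  hWindep : ∀ s t : ℝ, 0 ≤ s → s ≤ t →
    Indep (MeasurableSpace.comap (fun ω => W t ω - W s ω) inferInstance) (F s) P
  -- Assumption 1 of the paper
  hk_mono : AntitoneOn k (Icc 0 T)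
  hk_smooth : ContDiffOn ℝ 2 k (Icc 0 T)
  hkT : k T = 0
  hmu_nonneg : ∀ t, 0 ≤ t → 0 ≤ mu t
  hmu_smooth : ContDiffOn ℝ 1 mu (Ici 0)
  hmu_growth : ∀ t, 0 ≤ t → deriv mu t ≤ lam * mu t

namespace VASetting

variable {Ω : Type*} [mΩ : MeasurableSpace Ω] (S : VASetting Ω)

/-- `α := g + c − r`. -/
def alpha : ℝ := S.g + S.c - S.r

/-- The geometric Brownian motion `Z^z_s = z·exp((α−σ²/2)s + σW_s)`. -/
def Z (z s : ℝ) (ω : Ω) : ℝ :=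
  z * Real.exp ((S.alpha - S.sigma ^ 2 / 2) * s + S.sigma * S.W s ω)

/-- The survival probability `_s p_t = exp(−∫_0^s μ(t+u) du)`. -/
def surv (t s : ℝ) : ℝ := Real.exp (-(∫ u in (0:ℝ)..s, S.mu (t + u)))

/-- `f(t) = k(t)(c+μ(t)) − k'(t) − c`. -/
def f (t : ℝ) : ℝ := S.k t * (S.c + S.mu t) - deriv S.k t - S.c

/-- `t* = inf{t ∈ [0,T) : f(t) < 0} ∧ T` (with `inf ∅ = ∞`). -/
def tstar : ℝ := sInf ({t | t ∈ Ico (0:ℝ) S.T ∧ S.f t < 0} ∪ {S.T})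

/-- Assumption 2 of the paper: `f` changes sign at most once, from `+` to `−`,
together with one of the two monotonicity conditions (i), (ii). -/
def Assumption2 : Prop :=
  (∀ t ∈ Icc (0:ℝ) S.tstar, 0 ≤ S.f t) ∧
  (∀ t ∈ Ioc S.tstar S.T, S.f t < 0) ∧
  ((∀ t ∈ Ioc S.tstar S.T, deriv S.mu t ≤ 0 ∧ deriv S.f t ≤ 0) ∨
   (∀ t ∈ Ioc S.tstar S.T, 0 < deriv S.mu t ∧ deriv S.f t - S.mu t * S.f t ≤ 0))

/-- The payoff `𝒫_{t,z}(τ)`. -/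
def payoff (t z : ℝ) (τ : Ω → ℝ) (ω : Ω) : ℝ :=
  (∫ s in (0:ℝ)..(τ ω),
    Real.exp (-S.c * s) * S.surv t s *
      (S.f (t + s) + S.mu (t + s) * max (S.Z z s ω - 1) 0)) +
  (if τ ω = S.T - t then
    Real.exp (-S.c * (S.T - t)) * S.surv t (S.T - t) * max (S.Z z (S.T - t) ω - 1) 0
  else 0)

/-- Admissible stopping times for the problem started at time `t`:
`F`-stopping times with values in `[0, T−t]`. -/
def isAdmissible (t : ℝ) (τ : Ω → ℝ) : Prop :=
  IsStoppingTime S.F (fun ω => (τ ω : WithTop ℝ)) ∧ ∀ ω, τ ω ∈ Icc (0:ℝ) (S.T - t)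

/-- The value function `w(t,z) = sup_{0≤τ≤T−t} E[𝒫_{t,z}(τ)]`. -/
def w (t z : ℝ) : ℝ :=
  sSup {x | ∃ τ : Ω → ℝ, S.isAdmissible t τ ∧ x = ∫ ω, S.payoff t z τ ω ∂S.P}

/-- The optimal stopping boundary `b(t) = inf{z>0 : w(t,z)>0}`. -/
def b (t : ℝ) : ℝ := sInf {z | 0 < z ∧ 0 < S.w t z}

/-- The boundary extended by its terminal value `b(T) := 1`. -/
def bEx (t : ℝ) : ℝ := if t < S.T then S.b t else 1

/-- `H(t,z) = μ(t)(z−1)⁺ + f(t)`. -/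
def H (t z : ℝ) : ℝ := S.mu t * max (z - 1) 0 + S.f t

/-- The optimal stopping time `τ*_{t,z} = inf{s ≥ 0 : Z^z_s ≤ b(t+s)} ∧ (T−t)`. -/
def tauStar (t z : ℝ) (ω : Ω) : ℝ :=
  sInf ({s | 0 ≤ s ∧ S.Z z s ω ≤ S.bEx (t + s)} ∪ {S.T - t})

/-- The hitting time of the interior,
`τ'_{t,z} = inf{s ≥ 0 : Z^z_s < b(t+s)} ∧ (T−t)`. -/
def tauStrict (t z : ℝ) (ω : Ω) : ℝ :=
  sInf ({s | 0 ≤ s ∧ S.Z z s ω < S.bEx (t + s)} ∪ {S.T - t})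

/-- The continuation region `𝒞`. -/
def Cset : Set (ℝ × ℝ) := {p | p.1 ∈ Ico (0:ℝ) S.T ∧ 0 < p.2 ∧ 0 < S.w p.1 p.2}

/-- The stopping region `𝒟`. -/
def Dset : Set (ℝ × ℝ) :=
  {p | p.1 ∈ Ico (0:ℝ) S.T ∧ 0 < p.2 ∧ S.w p.1 p.2 = 0} ∪ {p | p.1 = S.T ∧ 0 < p.2}

/-- The log-normal transition density `Φ(z,s,y)` of `Z`. -/
def Phi (z s y : ℝ) : ℝ :=
  1 / (Real.sqrt (2 * Real.pi * S.sigma ^ 2 * s) * y) *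
    Real.exp (-(Real.log (y / z) - (S.alpha - S.sigma ^ 2 / 2) * s) ^ 2 /
      (2 * S.sigma ^ 2 * s))

/-- `μ_M = max_{s ∈ [0,T]} μ(s)`. -/
def muMax : ℝ := sSup (S.mu '' Icc (0:ℝ) S.T)

/-- The level curve `b_δ(t) = inf{z>0 : w(t,z) > δ}`. -/
def bDelta (δ t : ℝ) : ℝ := sInf {z | 0 < z ∧ δ < S.w t z}

/-- The quantity `Θ(t,z,ε)` of the paper. -/
def Theta (t z ε : ℝ) : ℝ :=
  (∫ ω, (if S.T - t - ε ≤ S.tauStar t z ω then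
      Real.exp (-S.c * (S.T - t - ε)) * S.surv (t + ε) (S.T - t - ε) *
        max (S.Z z (S.T - t - ε) ω - 1) 0
    else 0) ∂S.P) -
  (∫ ω, (if S.tauStar t z ω = S.T - t then
      Real.exp (-S.c * (S.T - t)) * S.surv t (S.T - t) * max (S.Z z (S.T - t) ω - 1) 0
    else 0) ∂S.P)

/-- `ψ` solves the boundary integral equation on `Γ_ψ = {ψ > 0}`. -/
def SolvesIntEq (ψ : ℝ → ℝ) : Prop :=
  ∀ t ∈ Ico (0:ℝ) S.T, 0 < ψ t →
    Real.exp (-S.c * (S.T - t)) * S.surv t (S.T - t) *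
        (∫ ω, max (S.Z (ψ t) (S.T - t) ω - 1) 0 ∂S.P) +
      (∫ s in (0:ℝ)..(S.T - t),
        Real.exp (-S.c * s) * S.surv t s *
          (∫ ω, (if ψ (t + s) < S.Z (ψ t) s ω then S.H (t + s) (S.Z (ψ t) s ω) else 0)
            ∂S.P)) = 0

/-- The class `Σ` of candidate boundaries. -/
def SigmaClass (ψ : ℝ → ℝ) : Prop :=
  (∀ t ∈ Icc (0:ℝ) S.T, 0 ≤ ψ t ∧ ψ t ≤ max (1 - S.f t / S.mu t) 0) ∧
  ∃ tψ ∈ Ico S.tstar S.T,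
    (∀ t ∈ Ico (0:ℝ) tψ, ψ t = 0) ∧ ContinuousOn ψ (Icc tψ S.T) ∧ ψ S.T = 1

/-- The Brownian motion `W̃` driving the account value under the pricing
measure (`W_t = σt − W̃_t` as in the paper's Girsanov change of measure). -/
def Wtilde (s : ℝ) (ω : Ω) : ℝ := S.sigma * s - S.W s ω

/-- The account value process `X_s = x₀·exp((r−c−σ²/2)s + σW̃_s)`. -/
def X (x0 s : ℝ) (ω : Ω) : ℝ :=
  x0 * Real.exp ((S.r - S.c - S.sigma ^ 2 / 2) * s + S.sigma * S.Wtilde s ω)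

/-- The pricing (risk-neutral) measure `Q`, with `dQ = M_T^{-1} dP`. -/
def Q : Measure Ω :=
  S.P.withDensity fun ω =>
    ENNReal.ofReal (Real.exp (S.sigma * S.W S.T ω - S.sigma ^ 2 * S.T / 2))

/-- The optimal surrender boundary `ℓ_{x₀}(t) = x₀e^{gt}/b(t)` (with value `∞`
where `b(t) = 0`). -/
def ell (x0 t : ℝ) : ℝ≥0∞ :=
  ENNReal.ofReal (x0 * Real.exp (S.g * t)) / ENNReal.ofReal (S.bEx t)

/-- The optimal surrender time `γ* = inf{s ∈ [0,T) : X_s ≥ ℓ_{x₀}(s)} ∧ T`. -/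
def gammaStar (x0 : ℝ) (ω : Ω) : ℝ :=
  sInf ({s | s ∈ Ico (0:ℝ) S.T ∧ S.ell x0 s ≤ ENNReal.ofReal (S.X x0 s ω)} ∪ {S.T})

/-- The rational price of the VA at time zero, `V₀ = x₀·u(0,1)` where
`u(t,z) = w(t,z) + 1 − k(t)`. -/
def V0 (x0 : ℝ) : ℝ := x0 * (S.w 0 1 + 1 - S.k 0)

end VASetting

section AuxGauss
open Real
open scoped NNReal

lemma gauss_pdf_shift (c : ℝ) (v : ℝ≥0) (hv : v ≠ 0) (x : ℝ) :
    gaussianPDFReal 0 v x * Real.exp (c * x)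
      = Real.exp (c ^ 2 * v / 2) * gaussianPDFReal (c * v) v x := by
  have hv' : (0:ℝ) < v := by positivity
  have h : -(x - 0) ^ 2 / (2 * v) + c * x = c ^ 2 * v / 2 + -(x - c * v) ^ 2 / (2 * (v:ℝ)) := by
    field_simp
    ring
  calc gaussianPDFReal 0 v x * Real.exp (c * x)
      = (Real.sqrt (2 * π * v))⁻¹ * Real.exp (-(x - 0) ^ 2 / (2 * v) + c * x) := by
        rw [gaussianPDFReal, mul_assoc, ← Real.exp_add]
    _ = Real.exp (c ^ 2 * v / 2) * gaussianPDFReal (c * v) v x := by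
        rw [h, Real.exp_add, gaussianPDFReal]
        ring

lemma integral_exp_gaussianReal (c : ℝ) (v : ℝ≥0) :
    Integrable (fun x => Real.exp (c * x)) (gaussianReal 0 v) ∧
      ∫ x, Real.exp (c * x) ∂(gaussianReal 0 v) = Real.exp (c ^ 2 * v / 2) := by
  rcases eq_or_ne v 0 with hv | hv
  · subst hv
    rw [gaussianReal_zero_var]
    have hm : AEStronglyMeasurable (fun x => Real.exp (c * x)) (Measure.dirac 0) :=
      (Real.continuous_exp.comp (continuous_const.mul continuous_id)).aestronglyMeasurable
    refine ⟨⟨hm, ?_⟩, ?_⟩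
    · rw [HasFiniteIntegral, lintegral_dirac]
      exact ENNReal.coe_lt_top
    · rw [integral_dirac]
      simp
  · have hpdf : gaussianPDF 0 v = fun x => ((gaussianPDFReal 0 v x).toNNReal : ℝ≥0∞) := rfl
    have hmeas : Measurable fun x => (gaussianPDFReal 0 v x).toNNReal :=
      (measurable_gaussianPDFReal 0 v).real_toNNReal
    have hcoe : ∀ x, ((gaussianPDFReal 0 v x).toNNReal : ℝ) = gaussianPDFReal 0 v x := fun x =>
      Real.coe_toNNReal _ (gaussianPDFReal_nonneg 0 v x)
    have hrw : gaussianReal 0 v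
        = volume.withDensity fun x => ((gaussianPDFReal 0 v x).toNNReal : ℝ≥0∞) := by
      rw [gaussianReal_of_var_ne_zero _ hv, hpdf]
    have hfun : (fun x => (gaussianPDFReal 0 v x).toNNReal • Real.exp (c * x))
        = fun x => Real.exp (c ^ 2 * v / 2) * gaussianPDFReal (c * v) v x := by
      funext x
      rw [NNReal.smul_def, smul_eq_mul, hcoe, gauss_pdf_shift c v hv]
    constructor
    · rw [hrw, integrable_withDensity_iff_integrable_smul hmeas, hfun]
      exact (integrable_gaussianPDFReal _ _).const_mul _
    · rw [hrw, integral_withDensity_eq_integral_smul hmeas, hfun, integral_const_mul,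
        integral_gaussianPDFReal_eq_one _ hv, mul_one]

end AuxGauss

namespace VAProof
open Real MeasureTheory Set
variable {Ω : Type*} [mΩ : MeasurableSpace Ω] (S : VASetting Ω)

/-- The normalized GBM factor. -/
noncomputable def E (s : ℝ) (ω : Ω) : ℝ :=
  Real.exp ((S.alpha - S.sigma ^ 2 / 2) * s + S.sigma * S.W s ω)

lemma E_nonneg (s : ℝ) (ω : Ω) : 0 ≤ E S s ω := (Real.exp_pos _).le

lemma Z_eq (z s : ℝ) (ω : Ω) : S.Z z s ω = z * E S s ω := rfl

lemma E_cont (ω : Ω) : Continuous fun s => E S s ω := by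
  apply Real.continuous_exp.comp
  exact ((continuous_const.mul continuous_id).add (continuous_const.mul (S.hWcont ω)))

lemma measurable_W_prod : Measurable fun p : Ω × ℝ => S.W p.2 p.1 := by
  have h := measurable_uncurry_of_continuous_of_measurable
    (u := S.W) S.hWcont S.hWmeas
  exact h.comp measurable_swap

lemma measurable_E_prod : Measurable fun p : Ω × ℝ => E S p.2 p.1 := by
  apply Real.measurable_exp.comp
  exact ((measurable_snd.const_mul _).add ((measurable_W_prod S).const_mul _))

lemma measurable_E (s : ℝ) : Measurable (E S s) := by
  apply Real.measurable_exp.comp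
  exact measurable_const.add ((S.hWmeas s).const_mul _)

lemma map_W (s : ℝ) (hs : 0 ≤ s) :
    Measure.map (S.W s) S.P = gaussianReal 0 s.toNNReal := by
  have h := S.hWgauss 0 s le_rfl hs
  simpa [S.hW0, sub_zero] using h

lemma integrable_integral_E (s : ℝ) (hs : 0 ≤ s) :
    Integrable (E S s) S.P ∧ ∫ ω, E S s ω ∂S.P = Real.exp (S.alpha * s) := by
  have hmap := map_W S s hs
  have hgauss := integral_exp_gaussianReal S.sigma s.toNNReal
  have haesm : AEStronglyMeasurable (fun x => Real.exp (S.sigma * x))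
      (Measure.map (S.W s) S.P) :=
    (Real.continuous_exp.comp (continuous_const.mul continuous_id)).aestronglyMeasurable
  have hint : Integrable (fun ω => Real.exp (S.sigma * S.W s ω)) S.P := by
    have := (integrable_map_measure haesm (S.hWmeas s).aemeasurable).mp (hmap ▸ hgauss.1)
    exact this
  have hval : ∫ ω, Real.exp (S.sigma * S.W s ω) ∂S.P
      = Real.exp (S.sigma ^ 2 * s.toNNReal / 2) := by
    rw [← hgauss.2, ← hmap, integral_map (S.hWmeas s).aemeasurable haesm]
  have hE : E S s = fun ω => Real.exp ((S.alpha - S.sigma ^ 2 / 2) * s)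
      * Real.exp (S.sigma * S.W s ω) := by
    funext ω; rw [E, ← Real.exp_add]
  constructor
  · rw [hE]; exact hint.const_mul _
  · rw [hE, integral_const_mul, hval, ← Real.exp_add, Real.coe_toNNReal s hs]
    ring_nf

lemma muMax_bound : 0 ≤ S.muMax ∧ ∀ x ∈ Icc (0:ℝ) S.T, S.mu x ≤ S.muMax := by
  have hcont : ContinuousOn S.mu (Icc 0 S.T) :=
    (S.hmu_smooth.continuousOn).mono (fun x hx => hx.1)
  have hbdd : BddAbove (S.mu '' Icc 0 S.T) :=
    (isCompact_Icc.image_of_continuousOn hcont).bddAbove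
  have h0T : (0:ℝ) ∈ Icc 0 S.T := ⟨le_rfl, S.hT.le⟩
  have hle : ∀ x ∈ Icc (0:ℝ) S.T, S.mu x ≤ S.muMax := fun x hx =>
    le_csSup hbdd ⟨x, hx, rfl⟩
  exact ⟨(S.hmu_nonneg 0 le_rfl).trans (hle 0 h0T), hle⟩

lemma exp_alpha_le {s : ℝ} (hs0 : 0 ≤ s) (hsT : s ≤ S.T) :
    Real.exp (S.alpha * s) ≤ Real.exp (|S.alpha| * S.T) := by
  apply Real.exp_le_exp.mpr
  calc S.alpha * s ≤ |S.alpha| * s := mul_le_mul_of_nonneg_right (le_abs_self _) hs0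
    _ ≤ |S.alpha| * S.T := mul_le_mul_of_nonneg_left hsT (abs_nonneg _)

lemma integrableOn_E (u : ℝ) (ω : Ω) :
    IntegrableOn (fun s => E S s ω) (Ioc (0:ℝ) u) volume :=
  (E_cont S ω).integrableOn_Ioc

lemma J_nonneg (u : ℝ) (ω : Ω) : 0 ≤ ∫ s in Ioc (0:ℝ) u, E S s ω :=
  setIntegral_nonneg measurableSet_Ioc fun s _ => E_nonneg S s ω

lemma J_props (u : ℝ) (hu0 : 0 ≤ u) (huT : u ≤ S.T) :
    Integrable (fun ω => ∫ s in Ioc (0:ℝ) u, E S s ω) S.P ∧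
      ∫ ω, (∫ s in Ioc (0:ℝ) u, E S s ω) ∂S.P ≤ u * Real.exp (|S.alpha| * S.T) := by
  have hPprob := S.probP
  have h1 : ∀ ω, ENNReal.ofReal (∫ s in Ioc (0:ℝ) u, E S s ω)
      = ∫⁻ s in Ioc (0:ℝ) u, ENNReal.ofReal (E S s ω) := fun ω =>
    MeasureTheory.ofReal_integral_eq_lintegral_ofReal (integrableOn_E S u ω)
      (Filter.Eventually.of_forall fun s => E_nonneg S s ω)
  have hmeas2 : AEMeasurable (Function.uncurry fun ω s => ENNReal.ofReal (E S s ω))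
      (S.P.prod (volume.restrict (Ioc (0:ℝ) u))) := by
    exact (ENNReal.measurable_ofReal.comp (measurable_E_prod S)).aemeasurable
  have hswap := MeasureTheory.lintegral_lintegral_swap hmeas2
  have hinner : ∀ s ∈ Ioc (0:ℝ) u,
      ∫⁻ ω, ENNReal.ofReal (E S s ω) ∂S.P = ENNReal.ofReal (Real.exp (S.alpha * s)) := by
    intro s hs
    have h := integrable_integral_E S s hs.1.le
    rw [← h.2, ← MeasureTheory.ofReal_integral_eq_lintegral_ofReal h.1
      (Filter.Eventually.of_forall fun ω => E_nonneg S s ω)]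
  have key : ∫⁻ ω, ENNReal.ofReal (∫ s in Ioc (0:ℝ) u, E S s ω) ∂S.P
      ≤ ENNReal.ofReal (u * Real.exp (|S.alpha| * S.T)) := by
    rw [lintegral_congr h1, hswap, setLIntegral_congr_fun measurableSet_Ioc
      hinner]
    calc ∫⁻ s in Ioc (0:ℝ) u, ENNReal.ofReal (Real.exp (S.alpha * s))
        ≤ ∫⁻ _ in Ioc (0:ℝ) u, ENNReal.ofReal (Real.exp (|S.alpha| * S.T)) := by
          refine setLIntegral_mono measurable_const fun s hs => ?_
          exact ENNReal.ofReal_le_ofReal (exp_alpha_le S hs.1.le (hs.2.trans huT))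
      _ = ENNReal.ofReal (Real.exp (|S.alpha| * S.T)) * volume (Ioc (0:ℝ) u) :=
          setLIntegral_const _ _
      _ = ENNReal.ofReal (u * Real.exp (|S.alpha| * S.T)) := by
          rw [Real.volume_Ioc, sub_zero, ← ENNReal.ofReal_mul (Real.exp_pos _).le, mul_comm]
  have haesm : AEStronglyMeasurable (fun ω => ∫ s in Ioc (0:ℝ) u, E S s ω) S.P := by
    have hf : StronglyMeasurable fun p : Ω × ℝ => E S p.2 p.1 :=
      (measurable_E_prod S).stronglyMeasurable
    exact hf.integral_prod_right'.aestronglyMeasurable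
  have hint : Integrable (fun ω => ∫ s in Ioc (0:ℝ) u, E S s ω) S.P := by
    refine ⟨haesm, ?_⟩
    rw [HasFiniteIntegral]
    calc ∫⁻ ω, ‖∫ s in Ioc (0:ℝ) u, E S s ω‖ₑ ∂S.P
        = ∫⁻ ω, ENNReal.ofReal (∫ s in Ioc (0:ℝ) u, E S s ω) ∂S.P :=
          lintegral_congr fun ω => (Real.enorm_eq_ofReal (J_nonneg S u ω))
      _ ≤ ENNReal.ofReal (u * Real.exp (|S.alpha| * S.T)) := key
      _ < ⊤ := ENNReal.ofReal_lt_top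
  refine ⟨hint, ?_⟩
  rw [integral_eq_lintegral_of_nonneg_ae (Filter.Eventually.of_forall (J_nonneg S u)) haesm]
  have := ENNReal.toReal_mono ENNReal.ofReal_ne_top key
  rwa [ENNReal.toReal_ofReal (by positivity)] at this

/-- The dominating function for payoff differences. -/
noncomputable def G (t : ℝ) (ω : Ω) : ℝ :=
  S.muMax * (∫ s in Ioc (0:ℝ) (S.T - t), E S s ω) + E S (S.T - t) ω

lemma G_nonneg (t : ℝ) (ω : Ω) : 0 ≤ G S t ω :=
  add_nonneg (mul_nonneg (muMax_bound S).1 (J_nonneg S _ ω)) (E_nonneg S _ ω)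

lemma G_props (t : ℝ) (ht : t ∈ Icc (0:ℝ) S.T) :
    Integrable (G S t) S.P ∧
      ∫ ω, G S t ω ∂S.P ≤ Real.exp (|S.alpha| * S.T) * (1 + S.muMax * S.T) := by
  set u := S.T - t with hu
  have hu0 : 0 ≤ u := by simp [hu]; linarith [ht.2]
  have huT : u ≤ S.T := by simp [hu]; linarith [ht.1]
  obtain ⟨hJint, hJle⟩ := J_props S u hu0 huT
  obtain ⟨hEint, hEval⟩ := integrable_integral_E S u hu0
  have hGint : Integrable (G S t) S.P := (hJint.const_mul _).add hEint
  refine ⟨hGint, ?_⟩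
  have : ∫ ω, G S t ω ∂S.P
      = S.muMax * (∫ ω, (∫ s in Ioc (0:ℝ) u, E S s ω) ∂S.P) + ∫ ω, E S u ω ∂S.P := by
    simp only [G]
    rw [integral_add (hJint.const_mul _) hEint, integral_const_mul]
  rw [this, hEval]
  have h1 : S.muMax * (∫ ω, (∫ s in Ioc (0:ℝ) u, E S s ω) ∂S.P)
      ≤ S.muMax * (u * Real.exp (|S.alpha| * S.T)) :=
    mul_le_mul_of_nonneg_left hJle (muMax_bound S).1
  have h2 : Real.exp (S.alpha * u) ≤ Real.exp (|S.alpha| * S.T) := exp_alpha_le S hu0 huT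
  have h3 : S.muMax * (u * Real.exp (|S.alpha| * S.T))
      ≤ S.muMax * (S.T * Real.exp (|S.alpha| * S.T)) :=
    mul_le_mul_of_nonneg_left
      (mul_le_mul_of_nonneg_right huT (Real.exp_pos _).le) (muMax_bound S).1
  nlinarith [Real.exp_pos (|S.alpha| * S.T), (muMax_bound S).1]

lemma measurable_tau {τ : Ω → ℝ} (hτ : IsStoppingTime S.F (fun ω => (τ ω : WithTop ℝ))) :
    Measurable τ := by
  apply measurable_of_Iic
  intro x
  have h := (S.F.le x) _ (hτ x)
  convert h using 1
  ext ω
  simp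

lemma main_estimates (t : ℝ) (ht0 : 0 ≤ t) (htT : t ≤ S.T) :
    ∃ K : ℝ, ∀ τ : Ω → ℝ, S.isAdmissible t τ → ∀ z : ℝ, 0 < z →
      Integrable (S.payoff t z τ) S.P ∧
      (∀ ω, |S.payoff t z τ ω| ≤ K + z * G S t ω) ∧
      ∀ z' : ℝ, 0 < z' → ∀ ω,
        |S.payoff t z' τ ω - S.payoff t z τ ω| ≤ |z' - z| * G S t ω := by
  classical
  haveI := S.probP
  set u := S.T - t with hu_def
  have hu0 : 0 ≤ u := by simp only [hu_def]; linarith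
  have huT : u ≤ S.T := by simp only [hu_def]; linarith
  obtain ⟨hmuM0, hmuM⟩ := muMax_bound S
  have hIcc : Icc (0:ℝ) u ⊆ Icc 0 S.T := Icc_subset_Icc le_rfl huT
  -- continuity facts
  have hmucomp : ContinuousOn (fun s => S.mu (t + s)) (Icc 0 u) := by
    apply S.hmu_smooth.continuousOn.comp (continuous_const.add continuous_id).continuousOn
    intro s hs
    exact add_nonneg ht0 hs.1
  have hsurv_cont : ContinuousOn (fun s => S.surv t s) (Icc 0 u) := by
    have hint : IntegrableOn (fun x => S.mu (t + x)) (uIcc (0:ℝ) u) volume := by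
      rw [uIcc_of_le hu0]
      exact hmucomp.integrableOn_Icc
    have hprim := intervalIntegral.continuousOn_primitive_interval hint
    rw [uIcc_of_le hu0] at hprim
    exact Real.continuous_exp.comp_continuousOn hprim.neg
  have hsurv_mem : ∀ s ∈ Icc (0:ℝ) u, 0 < S.surv t s ∧ S.surv t s ≤ 1 := by
    intro s hs
    refine ⟨Real.exp_pos _, ?_⟩
    rw [VASetting.surv, Real.exp_le_one_iff, neg_nonpos]
    apply intervalIntegral.integral_nonneg hs.1
    intro x hx
    exact S.hmu_nonneg _ (add_nonneg ht0 hx.1)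
  have hexp_mem : ∀ s ∈ Icc (0:ℝ) u, 0 < Real.exp (-S.c * s) ∧ Real.exp (-S.c * s) ≤ 1 := by
    intro s hs
    refine ⟨Real.exp_pos _, Real.exp_le_one_iff.mpr ?_⟩
    have := mul_nonneg S.hc hs.1
    linarith
  -- the deterministic integrand pieces
  set φ : ℝ → ℝ := fun s => Real.exp (-S.c * s) * S.surv t s * S.f (t + s) with hφ_def
  set ψ : ℝ → ℝ := fun s => Real.exp (-S.c * s) * S.surv t s * S.mu (t + s) with hψ_def
  have hψ_cont : ContinuousOn ψ (Icc 0 u) :=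
    (((Real.continuous_exp.comp (continuous_const.mul continuous_id)).continuousOn.mul
      hsurv_cont).mul hmucomp)
  have hψ_mem : ∀ s ∈ Icc (0:ℝ) u, 0 ≤ ψ s ∧ ψ s ≤ S.muMax := by
    intro s hs
    have h1 := hexp_mem s hs
    have h2 := hsurv_mem s hs
    have h3 : 0 ≤ S.mu (t + s) := S.hmu_nonneg _ (add_nonneg ht0 hs.1)
    have hs2 : s ≤ S.T - t := hs.2
    have h4 : S.mu (t + s) ≤ S.muMax := hmuM _ ⟨add_nonneg ht0 hs.1, by linarith⟩
    simp only [hψ_def]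
    constructor
    · exact mul_nonneg (mul_nonneg h1.1.le h2.1.le) h3
    · calc Real.exp (-S.c * s) * S.surv t s * S.mu (t + s)
          ≤ 1 * 1 * S.muMax := by
            apply mul_le_mul (mul_le_mul h1.2 h2.2 h2.1.le zero_le_one) h4 h3
            norm_num
        _ = S.muMax := by ring
  -- k and deriv k bounds, f bound
  have hk_cont : ContinuousOn S.k (Icc 0 S.T) := S.hk_smooth.continuousOn
  obtain ⟨Mk, hMk⟩ := isCompact_Icc.exists_bound_of_continuousOn hk_cont
  have hkd_cont : ContinuousOn (derivWithin S.k (Icc 0 S.T)) (Icc 0 S.T) :=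
    S.hk_smooth.continuousOn_derivWithin (uniqueDiffOn_Icc S.hT) (by norm_num)
  obtain ⟨Mk', hMk'⟩ := isCompact_Icc.exists_bound_of_continuousOn hkd_cont
  set Mf : ℝ := Mk * (S.c + S.muMax) + Mk' + S.c with hMf_def
  have hf_bound : ∀ x ∈ Ioo (0:ℝ) S.T, |S.f x| ≤ Mf := by
    intro x hx
    have hxT : x ∈ Icc (0:ℝ) S.T := ⟨hx.1.le, hx.2.le⟩
    have hd : deriv S.k x = derivWithin S.k (Icc 0 S.T) x :=
      (derivWithin_of_mem_nhds (Icc_mem_nhds hx.1 hx.2)).symm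
    have h1 : |S.k x| ≤ Mk := by have := hMk x hxT; rwa [Real.norm_eq_abs] at this
    have h2 : |deriv S.k x| ≤ Mk' := by
      rw [hd]; have := hMk' x hxT; rwa [Real.norm_eq_abs] at this
    have h3 : 0 ≤ S.mu x := S.hmu_nonneg x hx.1.le
    have h4 : S.mu x ≤ S.muMax := hmuM x hxT
    have h5 : |S.k x * (S.c + S.mu x)| ≤ Mk * (S.c + S.muMax) := by
      rw [abs_mul]
      apply mul_le_mul h1 _ (abs_nonneg _) ((abs_nonneg _).trans h1)
      rw [abs_of_nonneg (by linarith [S.hc])]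
      linarith [S.hc]
    rw [VASetting.f]
    calc |S.k x * (S.c + S.mu x) - deriv S.k x - S.c|
        ≤ |S.k x * (S.c + S.mu x) - deriv S.k x| + |S.c| := abs_sub _ _
      _ ≤ |S.k x * (S.c + S.mu x)| + |deriv S.k x| + |S.c| := by
          linarith [abs_sub (S.k x * (S.c + S.mu x)) (deriv S.k x)]
      _ ≤ Mf := by rw [hMf_def, abs_of_nonneg S.hc]; linarith
  -- φ is integrable on Ioc 0 u with a.e. bound Mf
  have hf_aesm : AEStronglyMeasurable (fun s => S.f (t + s)) (volume.restrict (Ioc 0 u)) := by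
    have hk' : AEStronglyMeasurable (fun s => S.k (t + s) * (S.c + S.mu (t + s)))
        (volume.restrict (Ioc 0 u)) := by
      apply ContinuousOn.aestronglyMeasurable _ measurableSet_Ioc
      apply ContinuousOn.mono _ Ioc_subset_Icc_self
      apply ContinuousOn.mul _ (continuousOn_const.add hmucomp)
      apply hk_cont.comp (continuous_const.add continuous_id).continuousOn
      intro s hs
      have hs1 : (0:ℝ) ≤ s := hs.1
      have hs2 : s ≤ S.T - t := hs.2
      simp only [id_eq, mem_Icc, Pi.add_apply]
      exact ⟨by linarith, by linarith⟩
    have hd : Measurable fun s : ℝ => deriv S.k (t + s) :=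
      (measurable_deriv S.k).comp (measurable_const.add measurable_id)
    simp only [VASetting.f]
    exact (hk'.sub hd.aestronglyMeasurable).sub aestronglyMeasurable_const
  have hae_ne : ∀ᵐ s ∂(volume.restrict (Ioc (0:ℝ) u)), s ≠ u := by
    rw [ae_iff]
    apply le_antisymm _ zero_le
    calc (volume.restrict (Ioc (0:ℝ) u)) {s | ¬s ≠ u}
        ≤ volume {s | ¬ s ≠ u} := Measure.restrict_le_self _
      _ = volume ({u} : Set ℝ) := by congr 1; ext x; simp
      _ = 0 := measure_singleton u
  have hφ_bound_ae : ∀ᵐ s ∂(volume.restrict (Ioc (0:ℝ) u)), ‖φ s‖ ≤ Mf := by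
    filter_upwards [hae_ne, ae_restrict_mem measurableSet_Ioc] with s hne hs
    have hts : t + s ∈ Ioo (0:ℝ) S.T := by
      constructor
      · linarith [hs.1]
      · have h2 : s ≤ u := hs.2
        have : s < u := lt_of_le_of_ne h2 hne
        simp only [hu_def] at this
        linarith
    have h1 := hexp_mem s ⟨hs.1.le, hs.2⟩
    have h2 := hsurv_mem s ⟨hs.1.le, hs.2⟩
    have h3 := hf_bound _ hts
    rw [Real.norm_eq_abs, hφ_def]
    calc |Real.exp (-S.c * s) * S.surv t s * S.f (t + s)|
        = Real.exp (-S.c * s) * S.surv t s * |S.f (t + s)| := by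
          rw [abs_mul, abs_of_nonneg (mul_nonneg h1.1.le h2.1.le)]
      _ ≤ 1 * 1 * Mf := by
          apply mul_le_mul (mul_le_mul h1.2 h2.2 h2.1.le zero_le_one) h3 (abs_nonneg _)
          norm_num
      _ = Mf := by ring
  have hφ_aesm : AEStronglyMeasurable φ (volume.restrict (Ioc 0 u)) := by
    apply AEStronglyMeasurable.mul _ hf_aesm
    apply ContinuousOn.aestronglyMeasurable _ measurableSet_Ioc
    exact ((Real.continuous_exp.comp (continuous_const.mul continuous_id)).continuousOn.mul
      (hsurv_cont.mono Ioc_subset_Icc_self))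
  have hφ_int : IntegrableOn φ (Ioc (0:ℝ) u) volume := by
    apply Integrable.mono' (integrable_const Mf) hφ_aesm hφ_bound_ae
  -- choose the constant K
  refine ⟨∫ s in Ioc (0:ℝ) u, |φ s|, ?_⟩
  intro τ hτ z hz
  have hτmeas : Measurable τ := measurable_tau S hτ.1
  have hr0 : ∀ ω, 0 ≤ τ ω := fun ω => (hτ.2 ω).1
  have hru : ∀ ω, τ ω ≤ u := fun ω => (hτ.2 ω).2
  have hE_intOn : ∀ ω, IntegrableOn (fun s => E S s ω) (Ioc (0:ℝ) u) volume :=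
    integrableOn_E S u
  -- rewriting the payoff
  have hg_eq : ∀ (z' : ℝ) (ω : Ω) (s : ℝ), Real.exp (-S.c * s) * S.surv t s *
      (S.f (t + s) + S.mu (t + s) * max (S.Z z' s ω - 1) 0)
      = φ s + ψ s * max (z' * E S s ω - 1) 0 := by
    intro z' ω s
    rw [Z_eq]
    simp only [hφ_def, hψ_def]
    ring
  have hpayoff_eq : ∀ (z' : ℝ) (ω : Ω), S.payoff t z' τ ω
      = (∫ s in (0:ℝ)..(τ ω), (φ s + ψ s * max (z' * E S s ω - 1) 0))
        + (if τ ω = u then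
            Real.exp (-S.c * u) * S.surv t u * max (z' * E S u ω - 1) 0 else 0) := by
    intro z' ω
    rw [VASetting.payoff]
    congr 1
    · apply intervalIntegral.integral_congr
      intro s _
      exact hg_eq z' ω s
  -- interval integrability
  have hφ_ii : ∀ r : ℝ, 0 ≤ r → r ≤ u → IntervalIntegrable φ volume 0 r := by
    intro r h0 h1
    rw [intervalIntegrable_iff_integrableOn_Ioc_of_le h0]
    exact hφ_int.mono_set (Ioc_subset_Ioc le_rfl h1)
  have hψM_ii : ∀ (z' : ℝ) (ω : Ω) (r : ℝ), 0 ≤ r → r ≤ u →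
      IntervalIntegrable (fun s => ψ s * max (z' * E S s ω - 1) 0) volume 0 r := by
    intro z' ω r h0 h1
    apply ContinuousOn.intervalIntegrable
    rw [uIcc_of_le h0]
    apply ContinuousOn.mul (hψ_cont.mono (Icc_subset_Icc le_rfl h1))
    exact (((continuous_const.mul (E_cont S ω)).sub continuous_const).max
      continuous_const).continuousOn
  -- pointwise bound on the running-integral part
  have hI1_bound : ∀ (z' : ℝ), 0 ≤ z' → ∀ ω : Ω,
      |∫ s in (0:ℝ)..(τ ω), (φ s + ψ s * max (z' * E S s ω - 1) 0)|
        ≤ (∫ s in Ioc (0:ℝ) u, |φ s|)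
          + S.muMax * z' * ∫ s in Ioc (0:ℝ) u, E S s ω := by
    intro z' hz' ω
    have h0 := hr0 ω
    have h1 := hru ω
    have hii : IntegrableOn (fun s => φ s + ψ s * max (z' * E S s ω - 1) 0)
        (Ioc (0:ℝ) (τ ω)) volume := by
      have := (hφ_ii _ h0 h1).add (hψM_ii z' ω _ h0 h1)
      rwa [intervalIntegrable_iff_integrableOn_Ioc_of_le h0] at this
    have hRHSint : IntegrableOn (fun s => |φ s| + S.muMax * z' * E S s ω)
        (Ioc (0:ℝ) u) volume :=
      hφ_int.abs.add ((hE_intOn ω).const_mul _)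
    calc |∫ s in (0:ℝ)..(τ ω), (φ s + ψ s * max (z' * E S s ω - 1) 0)|
        ≤ ∫ s in (0:ℝ)..(τ ω), |φ s + ψ s * max (z' * E S s ω - 1) 0| :=
          intervalIntegral.abs_integral_le_integral_abs h0
      _ = ∫ s in Ioc (0:ℝ) (τ ω), |φ s + ψ s * max (z' * E S s ω - 1) 0| :=
          intervalIntegral.integral_of_le h0
      _ ≤ ∫ s in Ioc (0:ℝ) (τ ω), (|φ s| + S.muMax * z' * E S s ω) := by
          apply setIntegral_mono_on hii.abs
            (hRHSint.mono_set (Ioc_subset_Ioc le_rfl h1)) measurableSet_Ioc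
          intro s hs
          have hsIcc : s ∈ Icc (0:ℝ) u := ⟨hs.1.le, hs.2.trans h1⟩
          have hψs := hψ_mem s hsIcc
          have hM0 : (0:ℝ) ≤ max (z' * E S s ω - 1) 0 := le_max_right _ _
          have hMle : max (z' * E S s ω - 1) 0 ≤ z' * E S s ω := by
            apply max_le (by linarith) (mul_nonneg hz' (E_nonneg S s ω))
          calc |φ s + ψ s * max (z' * E S s ω - 1) 0|
              ≤ |φ s| + |ψ s * max (z' * E S s ω - 1) 0| := abs_add_le _ _
            _ = |φ s| + ψ s * max (z' * E S s ω - 1) 0 := by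
                rw [abs_of_nonneg (mul_nonneg hψs.1 hM0)]
            _ ≤ |φ s| + S.muMax * (z' * E S s ω) := by
                have := mul_le_mul hψs.2 hMle hM0 hmuM0
                linarith
            _ = |φ s| + S.muMax * z' * E S s ω := by ring
      _ ≤ ∫ s in Ioc (0:ℝ) u, (|φ s| + S.muMax * z' * E S s ω) := by
          apply setIntegral_mono_set hRHSint
          · apply Filter.Eventually.of_forall
            intro s
            have : (0:ℝ) ≤ S.muMax * z' * E S s ω := by
              apply mul_nonneg (mul_nonneg hmuM0 hz') (E_nonneg S s ω)
            positivity
          · exact HasSubset.Subset.eventuallyLE (Ioc_subset_Ioc le_rfl h1)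
      _ = (∫ s in Ioc (0:ℝ) u, |φ s|) + S.muMax * z' * ∫ s in Ioc (0:ℝ) u, E S s ω := by
          rw [integral_add hφ_int.abs ((hE_intOn ω).const_mul _), integral_const_mul]
  -- pointwise bound on the terminal part
  have hc2 : 0 ≤ Real.exp (-S.c * u) * S.surv t u ∧ Real.exp (-S.c * u) * S.surv t u ≤ 1 := by
    have h1 := hexp_mem u ⟨hu0, le_rfl⟩
    have h2 := hsurv_mem u ⟨hu0, le_rfl⟩
    constructor
    · exact mul_nonneg h1.1.le h2.1.le
    · calc Real.exp (-S.c * u) * S.surv t u ≤ 1 * 1 :=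
          mul_le_mul h1.2 h2.2 h2.1.le zero_le_one
        _ = 1 := by norm_num
  have hI2_bound : ∀ (z' : ℝ), 0 ≤ z' → ∀ ω : Ω,
      |if τ ω = u then Real.exp (-S.c * u) * S.surv t u * max (z' * E S u ω - 1) 0 else 0|
        ≤ z' * E S u ω := by
    intro z' hz' ω
    have hM0 : (0:ℝ) ≤ max (z' * E S u ω - 1) 0 := le_max_right _ _
    have hMle : max (z' * E S u ω - 1) 0 ≤ z' * E S u ω :=
      max_le (by linarith [mul_nonneg hz' (E_nonneg S u ω)])
        (mul_nonneg hz' (E_nonneg S u ω))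
    by_cases h : τ ω = u
    · rw [if_pos h, abs_of_nonneg (mul_nonneg hc2.1 hM0)]
      calc Real.exp (-S.c * u) * S.surv t u * max (z' * E S u ω - 1) 0
          ≤ 1 * max (z' * E S u ω - 1) 0 := mul_le_mul_of_nonneg_right hc2.2 hM0
        _ = max (z' * E S u ω - 1) 0 := one_mul _
        _ ≤ z' * E S u ω := hMle
    · rw [if_neg h, abs_zero]
      exact mul_nonneg hz' (E_nonneg S u ω)
  -- total pointwise bound
  have hbound : ∀ (z' : ℝ), 0 ≤ z' → ∀ ω : Ω,
      |S.payoff t z' τ ω| ≤ (∫ s in Ioc (0:ℝ) u, |φ s|) + z' * G S t ω := by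
    intro z' hz' ω
    rw [hpayoff_eq z' ω]
    calc |(∫ s in (0:ℝ)..(τ ω), (φ s + ψ s * max (z' * E S s ω - 1) 0))
          + (if τ ω = u then
            Real.exp (-S.c * u) * S.surv t u * max (z' * E S u ω - 1) 0 else 0)|
        ≤ |∫ s in (0:ℝ)..(τ ω), (φ s + ψ s * max (z' * E S s ω - 1) 0)|
          + |if τ ω = u then
            Real.exp (-S.c * u) * S.surv t u * max (z' * E S u ω - 1) 0 else 0| := abs_add_le _ _
      _ ≤ ((∫ s in Ioc (0:ℝ) u, |φ s|)
            + S.muMax * z' * ∫ s in Ioc (0:ℝ) u, E S s ω) + z' * E S u ω :=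
          add_le_add (hI1_bound z' hz' ω) (hI2_bound z' hz' ω)
      _ = (∫ s in Ioc (0:ℝ) u, |φ s|) + z' * G S t ω := by
          simp only [G, ← hu_def]
          ring
  -- measurability of the payoff
  have hp_aesm : ∀ (z' : ℝ), AEStronglyMeasurable (S.payoff t z' τ) S.P := by
    intro z'
    set ν := volume.restrict (Ioc (0:ℝ) u) with hν_def
    have hSet : MeasurableSet {p : Ω × ℝ | p.2 ≤ τ p.1} :=
      measurableSet_le measurable_snd (hτmeas.comp measurable_fst)
    have hq : Measure.QuasiMeasurePreserving (Prod.snd : Ω × ℝ → ℝ) (S.P.prod ν) ν :=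
      Measure.quasiMeasurePreserving_snd
    have hφ2 : AEStronglyMeasurable (fun p : Ω × ℝ => φ p.2) (S.P.prod ν) :=
      hφ_aesm.comp_quasiMeasurePreserving hq
    have hψ2 : AEStronglyMeasurable (fun p : Ω × ℝ => ψ p.2) (S.P.prod ν) :=
      ((hψ_cont.mono Ioc_subset_Icc_self).aestronglyMeasurable
        measurableSet_Ioc).comp_quasiMeasurePreserving hq
    have hM2 : AEStronglyMeasurable
        (fun p : Ω × ℝ => max (z' * E S p.2 p.1 - 1) 0) (S.P.prod ν) :=
      ((((measurable_E_prod S).const_mul z').sub measurable_const).max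
        measurable_const).aestronglyMeasurable
    have hF_aesm : AEStronglyMeasurable
        (fun p : Ω × ℝ => ({q : Ω × ℝ | q.2 ≤ τ q.1}).indicator
          (fun q => φ q.2 + ψ q.2 * max (z' * E S q.2 q.1 - 1) 0) p) (S.P.prod ν) :=
      (hφ2.add (hψ2.mul hM2)).indicator hSet
    have hI1_aesm := hF_aesm.integral_prod_right'
    have hI2_meas : Measurable (fun ω => if τ ω = u then
        Real.exp (-S.c * u) * S.surv t u * max (z' * E S u ω - 1) 0 else 0) := by
      have hset2 : MeasurableSet {ω | τ ω = u} := hτmeas (measurableSet_singleton u)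
      exact Measurable.ite hset2
        (((((measurable_E S u).const_mul z').sub measurable_const).max
          measurable_const).const_mul _) measurable_const
    apply AEStronglyMeasurable.congr (hI1_aesm.add hI2_meas.aestronglyMeasurable)
    apply Filter.Eventually.of_forall
    intro ω
    have h1 : (fun s => ({q : Ω × ℝ | q.2 ≤ τ q.1}).indicator
        (fun q => φ q.2 + ψ q.2 * max (z' * E S q.2 q.1 - 1) 0) (ω, s))
        = fun s => (Iic (τ ω)).indicator
          (fun s => φ s + ψ s * max (z' * E S s ω - 1) 0) s := by
      funext s
      by_cases h : s ≤ τ ω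
      · rw [Set.indicator_of_mem (show (ω, s) ∈ {q : Ω × ℝ | q.2 ≤ τ q.1} from h),
          Set.indicator_of_mem (show s ∈ Iic (τ ω) from h)]
      · rw [Set.indicator_of_notMem (show (ω, s) ∉ {q : Ω × ℝ | q.2 ≤ τ q.1} from h),
          Set.indicator_of_notMem (show s ∉ Iic (τ ω) from h)]
    have h2 : (∫ s, ({q : Ω × ℝ | q.2 ≤ τ q.1}).indicator
        (fun q => φ q.2 + ψ q.2 * max (z' * E S q.2 q.1 - 1) 0) (ω, s) ∂ν)
        = ∫ s in (0:ℝ)..(τ ω), (φ s + ψ s * max (z' * E S s ω - 1) 0) := by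
      rw [h1, hν_def, setIntegral_indicator measurableSet_Iic, Set.Ioc_inter_Iic,
        inf_of_le_right (hru ω), intervalIntegral.integral_of_le (hr0 ω)]
    show (∫ s, _ ∂ν) + _ = S.payoff t z' τ ω
    rw [h2, hpayoff_eq z' ω]
  -- integrability of the payoff
  have hGint := (G_props S t ⟨ht0, htT⟩).1
  have hp_int : ∀ (z' : ℝ), 0 ≤ z' → Integrable (S.payoff t z' τ) S.P := by
    intro z' hz'
    apply Integrable.mono' ((integrable_const (∫ s in Ioc (0:ℝ) u, |φ s|)).add
      (hGint.const_mul z')) (hp_aesm z')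
    apply Filter.Eventually.of_forall
    intro ω
    rw [Real.norm_eq_abs]
    exact hbound z' hz' ω
  refine ⟨hp_int z hz.le, hbound z hz.le, ?_⟩
  -- Lipschitz-type pointwise bound
  intro z' hz' ω
  rw [hpayoff_eq z' ω, hpayoff_eq z ω]
  have h0 := hr0 ω
  have h1 := hru ω
  have hMdiff : ∀ s : ℝ, |max (z' * E S s ω - 1) 0 - max (z * E S s ω - 1) 0|
      ≤ |z' - z| * E S s ω := by
    intro s
    calc |max (z' * E S s ω - 1) 0 - max (z * E S s ω - 1) 0|
        ≤ |(z' * E S s ω - 1) - (z * E S s ω - 1)| := abs_max_sub_max_le_abs _ _ _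
      _ = |(z' - z) * E S s ω| := by ring_nf
      _ = |z' - z| * E S s ω := by rw [abs_mul, abs_of_nonneg (E_nonneg S s ω)]
  have hsub : (∫ s in (0:ℝ)..(τ ω), (φ s + ψ s * max (z' * E S s ω - 1) 0))
      - ∫ s in (0:ℝ)..(τ ω), (φ s + ψ s * max (z * E S s ω - 1) 0)
      = ∫ s in (0:ℝ)..(τ ω),
          (ψ s * max (z' * E S s ω - 1) 0 - ψ s * max (z * E S s ω - 1) 0) := by
    rw [← intervalIntegral.integral_sub ((hφ_ii _ h0 h1).add (hψM_ii z' ω _ h0 h1))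
      ((hφ_ii _ h0 h1).add (hψM_ii z ω _ h0 h1))]
    apply intervalIntegral.integral_congr
    intro s _
    ring
  have hA : |∫ s in (0:ℝ)..(τ ω),
      (ψ s * max (z' * E S s ω - 1) 0 - ψ s * max (z * E S s ω - 1) 0)|
      ≤ |z' - z| * (S.muMax * ∫ s in Ioc (0:ℝ) u, E S s ω) := by
    have hdiff_ii : IntegrableOn (fun s =>
        ψ s * max (z' * E S s ω - 1) 0 - ψ s * max (z * E S s ω - 1) 0)
        (Ioc (0:ℝ) (τ ω)) volume := by
      have := (hψM_ii z' ω _ h0 h1).sub (hψM_ii z ω _ h0 h1)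
      rwa [intervalIntegrable_iff_integrableOn_Ioc_of_le h0] at this
    have hRHSint : IntegrableOn (fun s => |z' - z| * (S.muMax * E S s ω))
        (Ioc (0:ℝ) u) volume := ((hE_intOn ω).const_mul _).const_mul _
    calc |∫ s in (0:ℝ)..(τ ω),
        (ψ s * max (z' * E S s ω - 1) 0 - ψ s * max (z * E S s ω - 1) 0)|
        ≤ ∫ s in (0:ℝ)..(τ ω),
            |ψ s * max (z' * E S s ω - 1) 0 - ψ s * max (z * E S s ω - 1) 0| :=
          intervalIntegral.abs_integral_le_integral_abs h0
      _ = ∫ s in Ioc (0:ℝ) (τ ω),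
            |ψ s * max (z' * E S s ω - 1) 0 - ψ s * max (z * E S s ω - 1) 0| :=
          intervalIntegral.integral_of_le h0
      _ ≤ ∫ s in Ioc (0:ℝ) (τ ω), |z' - z| * (S.muMax * E S s ω) := by
          apply setIntegral_mono_on hdiff_ii.abs
            (hRHSint.mono_set (Ioc_subset_Ioc le_rfl h1)) measurableSet_Ioc
          intro s hs
          have hsIcc : s ∈ Icc (0:ℝ) u := ⟨hs.1.le, hs.2.trans h1⟩
          have hψs := hψ_mem s hsIcc
          calc |ψ s * max (z' * E S s ω - 1) 0 - ψ s * max (z * E S s ω - 1) 0|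
              = ψ s * |max (z' * E S s ω - 1) 0 - max (z * E S s ω - 1) 0| := by
                rw [← mul_sub, abs_mul, abs_of_nonneg hψs.1]
            _ ≤ S.muMax * (|z' - z| * E S s ω) :=
                mul_le_mul hψs.2 (hMdiff s) (abs_nonneg _) hmuM0
            _ = |z' - z| * (S.muMax * E S s ω) := by ring
      _ ≤ ∫ s in Ioc (0:ℝ) u, |z' - z| * (S.muMax * E S s ω) := by
          apply setIntegral_mono_set hRHSint
          · apply Filter.Eventually.of_forall
            intro s
            exact mul_nonneg (abs_nonneg _) (mul_nonneg hmuM0 (E_nonneg S s ω))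
          · exact HasSubset.Subset.eventuallyLE (Ioc_subset_Ioc le_rfl h1)
      _ = |z' - z| * (S.muMax * ∫ s in Ioc (0:ℝ) u, E S s ω) := by
          rw [integral_const_mul, integral_const_mul]
  have hB : |(if τ ω = u then
        Real.exp (-S.c * u) * S.surv t u * max (z' * E S u ω - 1) 0 else 0)
      - (if τ ω = u then
        Real.exp (-S.c * u) * S.surv t u * max (z * E S u ω - 1) 0 else 0)|
      ≤ |z' - z| * E S u ω := by
    by_cases h : τ ω = u
    · rw [if_pos h, if_pos h, ← mul_sub, abs_mul, abs_of_nonneg hc2.1]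
      calc Real.exp (-S.c * u) * S.surv t u
            * |max (z' * E S u ω - 1) 0 - max (z * E S u ω - 1) 0|
          ≤ 1 * (|z' - z| * E S u ω) :=
            mul_le_mul hc2.2 (hMdiff u) (abs_nonneg _) zero_le_one
        _ = |z' - z| * E S u ω := one_mul _
    · rw [if_neg h, if_neg h, sub_zero, abs_zero]
      exact mul_nonneg (abs_nonneg _) (E_nonneg S u ω)
  calc |((∫ s in (0:ℝ)..(τ ω), (φ s + ψ s * max (z' * E S s ω - 1) 0))
        + (if τ ω = u then
            Real.exp (-S.c * u) * S.surv t u * max (z' * E S u ω - 1) 0 else 0))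
      - ((∫ s in (0:ℝ)..(τ ω), (φ s + ψ s * max (z * E S s ω - 1) 0))
        + (if τ ω = u then
            Real.exp (-S.c * u) * S.surv t u * max (z * E S u ω - 1) 0 else 0))|
      = |((∫ s in (0:ℝ)..(τ ω), (φ s + ψ s * max (z' * E S s ω - 1) 0))
          - ∫ s in (0:ℝ)..(τ ω), (φ s + ψ s * max (z * E S s ω - 1) 0))
        + ((if τ ω = u then
            Real.exp (-S.c * u) * S.surv t u * max (z' * E S u ω - 1) 0 else 0)
          - (if τ ω = u then
            Real.exp (-S.c * u) * S.surv t u * max (z * E S u ω - 1) 0 else 0))| := by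
        congr 1
        ring
    _ ≤ |(∫ s in (0:ℝ)..(τ ω), (φ s + ψ s * max (z' * E S s ω - 1) 0))
          - ∫ s in (0:ℝ)..(τ ω), (φ s + ψ s * max (z * E S s ω - 1) 0)|
        + |(if τ ω = u then
            Real.exp (-S.c * u) * S.surv t u * max (z' * E S u ω - 1) 0 else 0)
          - (if τ ω = u then
            Real.exp (-S.c * u) * S.surv t u * max (z * E S u ω - 1) 0 else 0)| := abs_add_le _ _
    _ ≤ |z' - z| * (S.muMax * ∫ s in Ioc (0:ℝ) u, E S s ω) + |z' - z| * E S u ω := by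
        apply add_le_add _ hB
        rw [hsub]
        exact hA
    _ = |z' - z| * G S t ω := by
        simp only [G, ← hu_def]
        ring


end VAProof

/-- Lemma 4.3: Lipschitz continuity of `z ↦ w(t,z)`, uniformly in
`t`, with constant `C = e^{|α|T}(1 + μ_M T)`. -/
theorem w_lipschitz_in_z
    {Ω : Type*} [mΩ : MeasurableSpace Ω] (S : VASetting Ω) :
    ∃ C : ℝ, C = Real.exp (|S.alpha| * S.T) * (1 + S.muMax * S.T) ∧ 0 < C ∧
      ∀ t ∈ Set.Icc (0:ℝ) S.T, ∀ z1 ∈ Set.Ioi (0:ℝ), ∀ z2 ∈ Set.Ioi (0:ℝ),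
        |S.w t z2 - S.w t z1| ≤ C * |z2 - z1| := by
  classical
  haveI := S.probP
  refine ⟨Real.exp (|S.alpha| * S.T) * (1 + S.muMax * S.T), rfl, ?_, ?_⟩
  · have h1 := (VAProof.muMax_bound S).1
    have h2 : 0 ≤ S.muMax * S.T := mul_nonneg h1 S.hT.le
    have h3 := Real.exp_pos (|S.alpha| * S.T)
    nlinarith
  · intro t ht z1 hz1 z2 hz2
    rw [Set.mem_Ioi] at hz1 hz2
    set C := Real.exp (|S.alpha| * S.T) * (1 + S.muMax * S.T) with hC_def
    obtain ⟨K, hK⟩ := VAProof.main_estimates S t ht.1 ht.2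
    set A : ℝ → Set ℝ := fun z =>
      {x | ∃ τ : Ω → ℝ, S.isAdmissible t τ ∧ x = ∫ ω, S.payoff t z τ ω ∂S.P} with hA_def
    have hw : ∀ z, S.w t z = sSup (A z) := fun z => rfl
    obtain ⟨hGint, hGle⟩ := VAProof.G_props S t ht
    have hτ0 : S.isAdmissible t (fun _ => 0) := by
      refine ⟨isStoppingTime_const S.F 0, fun ω => ⟨le_rfl, ?_⟩⟩
      show (0:ℝ) ≤ S.T - t
      have := ht.2; linarith
    have hne : ∀ z, (A z).Nonempty := fun z => ⟨_, (fun _ => 0), hτ0, rfl⟩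
    have hbdd : ∀ z : ℝ, 0 < z → BddAbove (A z) := by
      intro z hzpos
      refine ⟨K + z * ∫ ω, VAProof.G S t ω ∂S.P, ?_⟩
      rintro x ⟨τ, hτadm, rfl⟩
      obtain ⟨hint, hbd, -⟩ := hK τ hτadm z hzpos
      calc ∫ ω, S.payoff t z τ ω ∂S.P
          ≤ ∫ ω, (K + z * VAProof.G S t ω) ∂S.P := by
            apply integral_mono hint ((integrable_const K).add (hGint.const_mul z))
            intro ω
            exact (le_abs_self _).trans (hbd ω)
        _ = K + z * ∫ ω, VAProof.G S t ω ∂S.P := by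
            rw [integral_add (integrable_const K) (hGint.const_mul z), integral_const,
              integral_const_mul, probReal_univ, smul_eq_mul, one_mul]
    have hpair : ∀ za zb : ℝ, 0 < za → 0 < zb →
        sSup (A za) ≤ sSup (A zb) + C * |za - zb| := by
      intro za zb hza hzb
      apply csSup_le (hne za)
      rintro x ⟨τ, hτadm, rfl⟩
      obtain ⟨hintb, -, hlip⟩ := hK τ hτadm zb hzb
      have hinta := (hK τ hτadm za hza).1
      have h3 := hlip za hza
      have hdiff : (∫ ω, S.payoff t za τ ω ∂S.P) - (∫ ω, S.payoff t zb τ ω ∂S.P)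
          ≤ C * |za - zb| := by
        rw [← integral_sub hinta hintb]
        have habs : |∫ ω, (S.payoff t za τ ω - S.payoff t zb τ ω) ∂S.P|
            ≤ ∫ ω, |S.payoff t za τ ω - S.payoff t zb τ ω| ∂S.P := by
          simpa [Real.norm_eq_abs] using
            norm_integral_le_integral_norm (μ := S.P)
              (fun ω => S.payoff t za τ ω - S.payoff t zb τ ω)
        calc (∫ ω, (S.payoff t za τ ω - S.payoff t zb τ ω) ∂S.P)
            ≤ |∫ ω, (S.payoff t za τ ω - S.payoff t zb τ ω) ∂S.P| := le_abs_self _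
          _ ≤ ∫ ω, |S.payoff t za τ ω - S.payoff t zb τ ω| ∂S.P := habs
          _ ≤ ∫ ω, |za - zb| * VAProof.G S t ω ∂S.P := by
              apply integral_mono (hinta.sub hintb).abs (hGint.const_mul _) h3
          _ = |za - zb| * ∫ ω, VAProof.G S t ω ∂S.P := integral_const_mul _ _
          _ ≤ |za - zb| * C := by
              apply mul_le_mul_of_nonneg_left _ (abs_nonneg _)
              rw [hC_def]
              exact hGle
          _ = C * |za - zb| := mul_comm _ _
      have hmem : (∫ ω, S.payoff t zb τ ω ∂S.P) ∈ A zb := ⟨τ, hτadm, rfl⟩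
      have hle := le_csSup (hbdd zb hzb) hmem
      linarith
    have ha := hpair z2 z1 hz2 hz1
    have hb := hpair z1 z2 hz1 hz2
    rw [hw z1, hw z2, abs_sub_le_iff]
    constructor
    · linarith
    · rw [abs_sub_comm] at hb
      linarith
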